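/- For p = 1/2, the distribution Q_{n,1/2} has the closed form Q_{n,1/2}(j) = 1/(n+1) + C(n−1,n−j)·j^(j−2)·(n−j+1)^(n−j−1)/(2(n+1)^(n−1)) for each j ∈ [n]. -/

import Mathlib

open Finset

/-- The Abel-type summand `C(n−1,s)(n−s)^{n−s−2}(s+1)^{s−1}`, with the powers taken in
`ℝ` with integer exponents (so e.g. `1^{-1} = 1`). -/
noncomputable def abelTerm (n s : ℕ) : ℝ :=
  ((n - 1).choose s : ℝ) * ((n : ℝ) - s) ^ ((n : ℤ) - s - 2) * ((s : ℝ) + 1) ^ ((s : ℤ) - 1)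

/-- `Q_{n,p}(j)`: the (conditional) probability that the last car prefers spot `j ∈ [n]`,
given that all cars park, as established in Theorem 3:
`Q_{n,p}(j) = 2/(n+1) − (1/(n+1)^{n−1})[p·Σ_{s=n−j+1}^{n−1} C(n−1,s)(n−s)^{n−s−2}(s+1)^{s−1}`
`+ (1−p)·Σ_{s=0}^{n−j−1} C(n−1,s)(n−s)^{n−s−2}(s+1)^{s−1}]`. -/
noncomputable def Qform (n : ℕ) (p : ℝ) (j : ℕ) : ℝ :=
  2 / ((n : ℝ) + 1) - (1 / ((n : ℝ) + 1) ^ (n - 1)) *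
    (p * ∑ s ∈ Finset.Icc (n - j + 1) (n - 1), abelTerm n s
      + (1 - p) * ∑ s ∈ Finset.range (n - j), abelTerm n s)

private lemma trinom (m k j : ℕ) :
    (m.choose k) * ((m - k).choose j) = (m.choose j) * ((m - j).choose k) := by
  rcases le_or_gt (k + j) m with h | h
  · have h1 := Nat.choose_mul (n := m) (show k ≤ k + j from Nat.le_add_right _ _)
    have h2 := Nat.choose_mul (n := m) (show j ≤ k + j from Nat.le_add_left _ _)
    rw [Nat.add_sub_cancel_left] at h1
    rw [Nat.add_sub_cancel] at h2
    rw [← h1, ← h2, Nat.choose_symm_add]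
  · rcases le_or_gt k m with hk | hk
    · rw [Nat.choose_eq_zero_of_lt (show m - k < j by omega)]
      rcases le_or_gt j m with hj | hj
      · rw [Nat.choose_eq_zero_of_lt (show m - j < k by omega)]; simp
      · rw [Nat.choose_eq_zero_of_lt hj]; simp
    · rw [Nat.choose_eq_zero_of_lt hk, Nat.choose_eq_zero_of_lt (show m - j < k by omega)]
      simp

private lemma alt_sum_pow : ∀ i : ℕ, ∀ N : ℕ, i < N →
    ∑ k ∈ range (N + 1), (-1 : ℝ) ^ k * (N.choose k : ℝ) * (k : ℝ) ^ i = 0 := by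
  intro i
  induction i using Nat.strong_induction_on with
  | _ i IH =>
    intro N hiN
    rcases i with _ | i
    · simp only [pow_zero, mul_one]
      have h := Int.alternating_sum_range_choose_of_ne (show N ≠ 0 by omega)
      calc ∑ k ∈ range (N + 1), (-1 : ℝ) ^ k * (N.choose k : ℝ)
          = ((∑ k ∈ range (N + 1), ((-1) ^ k * N.choose k : ℤ) : ℤ) : ℝ) := by push_cast; rfl
        _ = 0 := by rw [h]; norm_num
    · rw [Finset.sum_range_succ']
      have h0 : (-1 : ℝ) ^ 0 * (N.choose 0 : ℝ) * ((0 : ℕ) : ℝ) ^ (i + 1) = 0 := by simp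
      rw [h0, add_zero]
      have expand : ∀ k ∈ range N,
          (-1 : ℝ) ^ (k + 1) * (N.choose (k + 1) : ℝ) * ((k + 1 : ℕ) : ℝ) ^ (i + 1)
            = ∑ t ∈ range (i + 1),
                (-(N : ℝ) * (i.choose t : ℝ)) * ((-1) ^ k * ((N - 1).choose k : ℝ) * (k : ℝ) ^ t) := by
        intro k _
        have hc : (N : ℝ) * ((N - 1).choose k : ℝ) = (N.choose (k + 1) : ℝ) * ((k : ℝ) + 1) := by
          have h2 := Nat.add_one_mul_choose_eq (N - 1) k
          rw [show N - 1 + 1 = N by omega] at h2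
          exact_mod_cast h2
        have e1 : ((k + 1 : ℕ) : ℝ) ^ (i + 1) = ((k : ℝ) + 1) ^ i * ((k : ℝ) + 1) := by
          push_cast; rw [pow_succ]
        rw [e1]
        calc (-1 : ℝ) ^ (k + 1) * (N.choose (k + 1) : ℝ) * (((k : ℝ) + 1) ^ i * ((k : ℝ) + 1))
            = (-1) ^ k * (-1) * ((N.choose (k + 1) : ℝ) * ((k : ℝ) + 1)) * ((k : ℝ) + 1) ^ i := by
              ring
          _ = (-1) ^ k * (-1) * ((N : ℝ) * ((N - 1).choose k : ℝ)) * ((k : ℝ) + 1) ^ i := by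
              rw [hc]
          _ = (-1) ^ k * (-1) * ((N : ℝ) * ((N - 1).choose k : ℝ)) *
                ∑ t ∈ range (i + 1), (k : ℝ) ^ t * 1 ^ (i - t) * (i.choose t : ℝ) := by
              rw [add_pow]
          _ = ∑ t ∈ range (i + 1),
                (-(N : ℝ) * (i.choose t : ℝ)) * ((-1) ^ k * ((N - 1).choose k : ℝ) * (k : ℝ) ^ t) := by
              rw [Finset.mul_sum]
              refine Finset.sum_congr rfl fun t _ => ?_
              rw [one_pow]; ring
      rw [Finset.sum_congr rfl expand, Finset.sum_comm]
      refine Finset.sum_eq_zero fun t ht => ?_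
      rw [← Finset.mul_sum]
      have hz : ∑ k ∈ range N, ((-1 : ℝ) ^ k * ((N - 1).choose k : ℝ) * (k : ℝ) ^ t) = 0 := by
        have htt := Finset.mem_range.1 ht
        have h3 := IH t htt (N - 1) (by omega)
        rw [show N - 1 + 1 = N by omega] at h3
        exact h3
      rw [hz, mul_zero]

private lemma alt_diff (N : ℕ) (hN : 1 ≤ N) (x : ℝ) :
    ∑ k ∈ range (N + 1), (-1 : ℝ) ^ k * (N.choose k : ℝ) * (x + (k : ℝ)) ^ (N - 1) = 0 := by
  have expand : ∀ k ∈ range (N + 1),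
      (-1 : ℝ) ^ k * (N.choose k : ℝ) * (x + (k : ℝ)) ^ (N - 1)
        = ∑ t ∈ range N,
            (x ^ t * ((N - 1).choose t : ℝ)) * ((-1) ^ k * (N.choose k : ℝ) * (k : ℝ) ^ (N - 1 - t)) := by
    intro k _
    rw [add_pow x (k : ℝ) (N - 1), Finset.mul_sum, show N - 1 + 1 = N by omega]
    refine Finset.sum_congr rfl fun t _ => ?_
    ring
  rw [Finset.sum_congr rfl expand, Finset.sum_comm]
  refine Finset.sum_eq_zero fun t ht => ?_
  rw [← Finset.mul_sum, alt_sum_pow (N - 1 - t) N (by omega), mul_zero]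

private noncomputable def Fdef (m : ℕ) (S x : ℝ) (k j : ℕ) : ℝ :=
  (m.choose k : ℝ) * ((m - k).choose j : ℝ) * S ^ j * (-1) ^ (m + k + j) * x
    * (x + (k : ℝ)) ^ (m - 1 - j)

private lemma abel (m : ℕ) (x y : ℝ) :
    (y + (m : ℝ)) ^ m
      + ∑ k ∈ Icc 1 m, (m.choose k : ℝ) * x * (x + (k : ℝ)) ^ (k - 1)
          * (y + ((m - k : ℕ) : ℝ)) ^ (m - k)
    = (x + y + (m : ℝ)) ^ m := by
  set S : ℝ := x + y + (m : ℝ) with hS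
  have key : ∀ k ∈ Icc 1 m,
      (m.choose k : ℝ) * x * (x + (k : ℝ)) ^ (k - 1) * (y + ((m - k : ℕ) : ℝ)) ^ (m - k)
        = ∑ j ∈ range (m + 1), Fdef m S x k j := by
    intro k hk
    rw [Finset.mem_Icc] at hk
    obtain ⟨hk1, hk2⟩ := hk
    have hbase : y + ((m - k : ℕ) : ℝ) = S - (x + (k : ℝ)) := by
      rw [Nat.cast_sub hk2, hS]; ring
    rw [hbase, sub_pow, Finset.mul_sum]
    have step : ∀ j ∈ range (m - k + 1),
        (m.choose k : ℝ) * x * (x + (k : ℝ)) ^ (k - 1) *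
          ((-1) ^ (j + (m - k)) * S ^ j * (x + (k : ℝ)) ^ (m - k - j) * ((m - k).choose j : ℝ))
          = Fdef m S x k j := by
      intro j hj
      have hj' : j ≤ m - k := by have := Finset.mem_range.1 hj; omega
      have e1 : (x + (k : ℝ)) ^ (k - 1) * (x + (k : ℝ)) ^ (m - k - j)
          = (x + (k : ℝ)) ^ (m - 1 - j) := by
        rw [← pow_add]; congr 1; omega
      have e2 : (-1 : ℝ) ^ (m + k + j) = (-1 : ℝ) ^ (j + (m - k)) := by
        rw [show m + k + j = j + (m - k) + 2 * k by omega, pow_add, pow_mul, neg_one_sq,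
          one_pow, mul_one]
      simp only [Fdef]
      rw [e2]
      linear_combination ((m.choose k : ℝ) * ((m - k).choose j : ℝ) * S ^ j
        * (-1 : ℝ) ^ (j + (m - k)) * x) * e1
    rw [Finset.sum_congr rfl step]
    refine Finset.sum_subset (Finset.range_subset_range.2 (by omega)) fun j _ hj => ?_
    have hj' : m - k < j := by simp only [Finset.mem_range] at hj; omega
    simp [Fdef, Nat.choose_eq_zero_of_lt hj']
  rw [Finset.sum_congr rfl key, Finset.sum_comm]
  have h0 : (y + (m : ℝ)) ^ m
      = ∑ j ∈ range (m + 1), (-1 : ℝ) ^ (j + m) * S ^ j * x ^ (m - j) * (m.choose j : ℝ) := by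
    rw [show y + (m : ℝ) = S - x by rw [hS]; ring, sub_pow]
  rw [h0, ← Finset.sum_add_distrib]
  have main : ∀ j ∈ range (m + 1),
      ((-1 : ℝ) ^ (j + m) * S ^ j * x ^ (m - j) * (m.choose j : ℝ)
          + ∑ k ∈ Icc 1 m, Fdef m S x k j)
        = if j = m then S ^ m else 0 := by
    intro j hj
    have hjm' : j < m + 1 := Finset.mem_range.1 hj
    by_cases hjm : j = m
    · rw [if_pos hjm, hjm]
      have hz : ∀ k ∈ Icc 1 m, Fdef m S x k m = 0 := by
        intro k hk
        rw [Finset.mem_Icc] at hk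
        simp [Fdef, Nat.choose_eq_zero_of_lt (show m - k < m by omega)]
      rw [Finset.sum_eq_zero hz, add_zero, Nat.sub_self, pow_zero, Nat.choose_self,
        show m + m = 2 * m by omega, pow_mul, neg_one_sq, one_pow]
      norm_num
    · have hjlt : j < m := by omega
      rw [if_neg hjm]
      have hins : (range (m + 1) : Finset ℕ) = insert 0 (Icc 1 m) := by
        ext a; simp only [Finset.mem_range, Finset.mem_insert, Finset.mem_Icc]; omega
      have hF0 : Fdef m S x 0 j
          = (-1 : ℝ) ^ (j + m) * S ^ j * x ^ (m - j) * (m.choose j : ℝ) := by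
        simp only [Fdef, Nat.choose_zero_right, Nat.cast_one, Nat.sub_zero, Nat.cast_zero,
          add_zero, Nat.add_zero, one_mul]
        have e5 : x * x ^ (m - 1 - j) = x ^ (m - j) := by
          rw [← pow_succ']; congr 1; omega
        rw [show m + j = j + m by omega]
        linear_combination ((m.choose j : ℝ) * S ^ j * (-1 : ℝ) ^ (j + m)) * e5
      have hcomb : (-1 : ℝ) ^ (j + m) * S ^ j * x ^ (m - j) * (m.choose j : ℝ)
          + ∑ k ∈ Icc 1 m, Fdef m S x k j = ∑ k ∈ range (m + 1), Fdef m S x k j := by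
        rw [hins, Finset.sum_insert (by simp), hF0]
      rw [hcomb]
      have hN1 : 1 ≤ m - j := by omega
      have hFkj : ∀ k ∈ range (m + 1), Fdef m S x k j
          = ((m.choose j : ℝ) * S ^ j * (-1) ^ (m + j) * x)
            * ((-1) ^ k * ((m - j).choose k : ℝ) * (x + (k : ℝ)) ^ (m - j - 1)) := by
        intro k _
        have tri : (m.choose k : ℝ) * ((m - k).choose j : ℝ)
            = (m.choose j : ℝ) * ((m - j).choose k : ℝ) := by exact_mod_cast trinom m k j
        have e3 : (-1 : ℝ) ^ (m + k + j) = (-1) ^ (m + j) * (-1) ^ k := by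
          rw [show m + k + j = (m + j) + k by omega, pow_add]
        have e4 : m - 1 - j = m - j - 1 := by omega
        simp only [Fdef]
        rw [e4, e3]
        linear_combination (S ^ j * ((-1 : ℝ) ^ (m + j) * (-1) ^ k) * x
          * (x + (k : ℝ)) ^ (m - j - 1)) * tri
      rw [Finset.sum_congr rfl hFkj, ← Finset.mul_sum]
      have hrestrict : ∑ k ∈ range (m + 1),
          ((-1 : ℝ) ^ k * ((m - j).choose k : ℝ) * (x + (k : ℝ)) ^ (m - j - 1))
          = ∑ k ∈ range ((m - j) + 1),
          ((-1 : ℝ) ^ k * ((m - j).choose k : ℝ) * (x + (k : ℝ)) ^ (m - j - 1)) := by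
        refine (Finset.sum_subset (Finset.range_subset_range.2 (by omega)) fun k _ hk => ?_).symm
        have : m - j < k := by simp only [Finset.mem_range] at hk; omega
        simp [Nat.choose_eq_zero_of_lt this]
      rw [hrestrict, alt_diff (m - j) hN1 x, mul_zero]
  rw [Finset.sum_congr rfl main, Finset.sum_ite_eq' (range (m + 1)) m (fun _ => S ^ m)]
  simp

private lemma abel_sum (n : ℕ) (hn : 1 ≤ n) :
    ∑ s ∈ range n, abelTerm n s = 2 * ((n : ℝ) + 1) ^ ((n : ℤ) - 2) := by
  rcases eq_or_lt_of_le hn with h1 | h2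
  · rw [← h1]
    norm_num [abelTerm]
  · -- n ≥ 2
    set m := n - 1 with hm
    have hm1 : 1 ≤ m := by omega
    have hnm : n = m + 1 := by omega
    have hnr : (n : ℝ) = (m : ℝ) + 1 := by rw [hnm]; push_cast; ring
    -- RHS conversion
    have hrhs : ((n : ℝ) + 1) ^ ((n : ℤ) - 2) = ((n : ℝ) + 1) ^ (m - 1) := by
      rw [show (n : ℤ) - 2 = ((m - 1 : ℕ) : ℤ) by omega, zpow_natCast]
    rw [hrhs]
    -- endpoint values
    have hA0 : abelTerm n 0 = (n : ℝ) ^ (m - 1) := by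
      simp only [abelTerm, Nat.choose_zero_right, Nat.cast_one, Nat.cast_zero, one_mul, sub_zero]
      rw [show (n : ℤ) - 2 = ((m - 1 : ℕ) : ℤ) by omega, zpow_natCast]
      norm_num
    have hAm : abelTerm n m = (n : ℝ) ^ (m - 1) := by
      simp only [abelTerm]
      rw [show n - 1 = m from rfl, Nat.choose_self, show (n : ℝ) - (m : ℝ) = 1 by rw [hnr]; ring,
        one_zpow, show (m : ℤ) - 1 = ((m - 1 : ℕ) : ℤ) by omega, zpow_natCast]
      rw [show (m : ℝ) + 1 = (n : ℝ) by rw [hnr]]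
      norm_num
    have hmid : ∀ s ∈ Icc 1 (m - 1), abelTerm n s
        = (m.choose s : ℝ) * ((n : ℝ) - s) ^ (m - s - 1) * ((s : ℝ) + 1) ^ (s - 1) := by
      intro s hs
      rw [Finset.mem_Icc] at hs
      simp only [abelTerm]
      rw [show n - 1 = m from rfl,
        show (n : ℤ) - s - 2 = ((m - s - 1 : ℕ) : ℤ) by omega, zpow_natCast,
        show (s : ℤ) - 1 = ((s - 1 : ℕ) : ℤ) by omega, zpow_natCast]
    -- split the sum
    have hsplit : (range n : Finset ℕ) = insert 0 (insert m (Icc 1 (m - 1))) := by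
      ext a; simp only [Finset.mem_range, Finset.mem_insert, Finset.mem_Icc]; omega
    rw [hsplit, Finset.sum_insert (by simp [Finset.mem_Icc]; omega),
      Finset.sum_insert (by simp [Finset.mem_Icc]; omega), hA0, hAm,
      Finset.sum_congr rfl hmid]
    -- Abel instance 1 : x = 1, y = 1
    have A1 := abel m 1 1
    have hIcc : (Icc 1 m : Finset ℕ) = insert m (Icc 1 (m - 1)) := by
      ext a; simp only [Finset.mem_insert, Finset.mem_Icc]; omega
    rw [hIcc, Finset.sum_insert (by simp [Finset.mem_Icc]; omega)] at A1
    have hterm_m : (m.choose m : ℝ) * 1 * (1 + (m : ℝ)) ^ (m - 1)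
        * (1 + ((m - m : ℕ) : ℝ)) ^ (m - m) = (n : ℝ) ^ (m - 1) := by
      rw [Nat.choose_self, Nat.sub_self]
      push_cast
      rw [show (1 : ℝ) + (m : ℝ) = (n : ℝ) by rw [hnr]; ring]
      norm_num
    rw [hterm_m] at A1
    -- decompose middle terms of A1
    have hdecomp : ∀ k ∈ Icc 1 (m - 1),
        (m.choose k : ℝ) * 1 * (1 + (k : ℝ)) ^ (k - 1) * (1 + ((m - k : ℕ) : ℝ)) ^ (m - k)
          = (m.choose k : ℝ) * ((n : ℝ) - k) ^ (m - k - 1) * ((k : ℝ) + 1) ^ (k - 1)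
            + (m : ℝ) * (((m - 1).choose k : ℝ) * ((n : ℝ) - k) ^ (m - k - 1)
                * ((k : ℝ) + 1) ^ (k - 1)) := by
      intro k hk
      rw [Finset.mem_Icc] at hk
      have hbase : 1 + ((m - k : ℕ) : ℝ) = (n : ℝ) - k := by
        rw [Nat.cast_sub (by omega), hnr]; ring
      have hpow : ((n : ℝ) - k) ^ (m - k) = ((n : ℝ) - k) ^ (m - k - 1) * ((n : ℝ) - k) := by
        rw [← pow_succ]; congr 1; omega
      have hchoose : (m.choose k : ℝ) * ((m - k : ℕ) : ℝ) = (m : ℝ) * ((m - 1).choose k : ℝ) := by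
        have := trinom m k 1
        rw [Nat.choose_one_right, Nat.choose_one_right] at this
        exact_mod_cast this
      rw [hbase, hpow]
      have hnk : (n : ℝ) - k = ((m - k : ℕ) : ℝ) + 1 := by
        rw [Nat.cast_sub (by omega), hnr]; ring
      calc (m.choose k : ℝ) * 1 * (1 + (k : ℝ)) ^ (k - 1)
            * (((n : ℝ) - k) ^ (m - k - 1) * ((n : ℝ) - k))
          = (m.choose k : ℝ) * (1 + (k : ℝ)) ^ (k - 1) * ((n : ℝ) - k) ^ (m - k - 1)
              * (((m - k : ℕ) : ℝ) + 1) := by rw [← hnk]; ring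
        _ = (m.choose k : ℝ) * (1 + (k : ℝ)) ^ (k - 1) * ((n : ℝ) - k) ^ (m - k - 1)
              + ((m.choose k : ℝ) * ((m - k : ℕ) : ℝ)) * ((1 + (k : ℝ)) ^ (k - 1)
                * ((n : ℝ) - k) ^ (m - k - 1)) := by ring
        _ = _ := by rw [hchoose]; ring_nf
    rw [Finset.sum_congr rfl hdecomp, Finset.sum_add_distrib, ← Finset.mul_sum] at A1
    -- Abel instance 2 : m-1, x = 1, y = 2
    have A2 := abel (m - 1) 1 2
    have hA2congr : ∀ k ∈ Icc 1 (m - 1),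
        ((m - 1).choose k : ℝ) * 1 * (1 + (k : ℝ)) ^ (k - 1)
            * (2 + ((m - 1 - k : ℕ) : ℝ)) ^ (m - 1 - k)
          = ((m - 1).choose k : ℝ) * ((n : ℝ) - k) ^ (m - k - 1) * ((k : ℝ) + 1) ^ (k - 1) := by
      intro k hk
      rw [Finset.mem_Icc] at hk
      have hbase : 2 + ((m - 1 - k : ℕ) : ℝ) = (n : ℝ) - k := by
        rw [Nat.cast_sub (by omega), Nat.cast_sub (by omega), hnr]; ring
      rw [hbase, show m - 1 - k = m - k - 1 by omega]
      ring
    rw [Finset.sum_congr rfl hA2congr] at A2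
    have hc1 : (2 : ℝ) + ((m - 1 : ℕ) : ℝ) = (n : ℝ) := by
      rw [Nat.cast_sub (by omega), hnr]; ring
    have hc2 : (1 : ℝ) + 2 + ((m - 1 : ℕ) : ℝ) = (n : ℝ) + 1 := by
      rw [Nat.cast_sub (by omega), hnr]; ring
    rw [hc1, hc2] at A2
    -- final algebra
    have hp1 : ((1 : ℝ) + 1 + (m : ℝ)) ^ m = ((n : ℝ) + 1) ^ (m - 1) * ((n : ℝ) + 1) := by
      rw [show (1 : ℝ) + 1 + (m : ℝ) = (n : ℝ) + 1 by rw [hnr]; ring, ← pow_succ]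
      congr 1; omega
    have hp2 : ((1 : ℝ) + (m : ℝ)) ^ m = (n : ℝ) ^ (m - 1) * (n : ℝ) := by
      rw [show (1 : ℝ) + (m : ℝ) = (n : ℝ) by rw [hnr]; ring, ← pow_succ]
      congr 1; omega
    rw [hp1, hp2] at A1
    linear_combination A1 - (m : ℝ) * A2
      + (((n : ℝ) + 1) ^ (m - 1) - (n : ℝ) ^ (m - 1)) * hnr


/-- **Closed form at `p = 1/2`.** For each `j ∈ [n]`,
`Q_{n,1/2}(j) = 1/(n+1) + C(n−1,n−j)·j^(j−2)·(n−j+1)^(n−j−1)/(2(n+1)^(n−1))`,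
with powers interpreted in `ℝ` with integer exponents. -/
theorem Qform_half_closed_form (n : ℕ) (hn : 0 < n) (j : ℕ) (hj1 : 1 ≤ j) (hjn : j ≤ n) :
    Qform n (1 / 2) j
      = 1 / ((n : ℝ) + 1)
        + ((n - 1).choose (n - j) : ℝ) * (j : ℝ) ^ ((j : ℤ) - 2)
            * ((n : ℝ) - j + 1) ^ ((n : ℤ) - j - 1) / (2 * ((n : ℝ) + 1) ^ (n - 1)) := by
  have hc0 : ((n : ℝ) + 1) ≠ 0 := by positivity
  have hq0 : ((n : ℝ) + 1) ^ (n - 1) ≠ 0 := by positivity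
  -- the removed term equals the closed-form numerator
  have hA : abelTerm n (n - j)
      = ((n - 1).choose (n - j) : ℝ) * (j : ℝ) ^ ((j : ℤ) - 2)
          * ((n : ℝ) - j + 1) ^ ((n : ℤ) - j - 1) := by
    unfold abelTerm
    rw [Nat.cast_sub hjn, Nat.cast_sub hjn,
      show (n : ℝ) - ((n : ℝ) - (j : ℝ)) = (j : ℝ) by ring,
      show (n : ℤ) - ((n : ℤ) - (j : ℤ)) - 2 = (j : ℤ) - 2 by ring]
  -- splitting the index set
  have e1 : (Finset.Icc (n - j + 1) (n - 1) : Finset ℕ) = Finset.Ico (n - j + 1) n := by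
    rw [← Finset.Ico_add_one_right_eq_Icc]
    congr 1
    omega
  have e2 : (∑ s ∈ range (n - j + 1), abelTerm n s) + ∑ s ∈ Ico (n - j + 1) n, abelTerm n s
      = ∑ s ∈ range n, abelTerm n s := by
    rw [Finset.range_eq_Ico, Finset.range_eq_Ico]
    exact Finset.sum_Ico_consecutive _ (by omega) (by omega)
  have e3 : ∑ s ∈ range (n - j + 1), abelTerm n s
      = (∑ s ∈ range (n - j), abelTerm n s) + abelTerm n (n - j) :=
    Finset.sum_range_succ _ _
  have hz : ((n : ℝ) + 1) ^ ((n : ℤ) - 2) = ((n : ℝ) + 1) ^ (n - 1) / ((n : ℝ) + 1) := by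
    rw [eq_div_iff hc0, ← zpow_add_one₀ hc0,
      show (n : ℤ) - 2 + 1 = ((n - 1 : ℕ) : ℤ) by omega, zpow_natCast]
  have hsum : (∑ s ∈ Finset.Icc (n - j + 1) (n - 1), abelTerm n s)
      + ∑ s ∈ Finset.range (n - j), abelTerm n s
      = 2 * (((n : ℝ) + 1) ^ (n - 1) / ((n : ℝ) + 1))
        - ((n - 1).choose (n - j) : ℝ) * (j : ℝ) ^ ((j : ℤ) - 2)
            * ((n : ℝ) - j + 1) ^ ((n : ℤ) - j - 1) := by
    rw [e1, ← hz, ← abel_sum n hn, ← e2, e3, ← hA]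
    ring
  unfold Qform
  rw [show ((1 : ℝ) - 1 / 2) = 1 / 2 by norm_num,
    show (1 / 2 : ℝ) * (∑ s ∈ Finset.Icc (n - j + 1) (n - 1), abelTerm n s)
        + 1 / 2 * ∑ s ∈ Finset.range (n - j), abelTerm n s
      = ((∑ s ∈ Finset.Icc (n - j + 1) (n - 1), abelTerm n s)
          + ∑ s ∈ Finset.range (n - j), abelTerm n s) / 2 by ring,
    hsum]
  field_simp
  ring
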